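/- Assume there exist a real constant k > 1 and a constant C > 0 such that p_{n+1} − p_n ≤ C·(log p_n)^k for every n ∈ ℕ. Then for every real ξ > 1 there exists a real A > 1 such that the sequence (⌊A^{n^ξ}⌋)_{n ≥ 1} is strictly increasing and ⌊A^{n^ξ}⌋ is a prime number for every integer n ≥ 1. -/

import Mathlib

open Real Filter

lemma aux_seq_exists {P : ℕ → ℕ → Prop} {R : ℕ → ℕ → ℕ → Prop} (q0 : ℕ) (h0 : P 0 q0)
    (hstep : ∀ n q, P n q → ∃ p, P (n + 1) p ∧ R n q p) :
    ∃ f : ℕ → ℕ, f 0 = q0 ∧ (∀ n, P n (f n)) ∧ ∀ n, R n (f n) (f (n + 1)) := by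
  let g : ∀ n : ℕ, {q : ℕ // P n q} := fun n =>
    Nat.rec ⟨q0, h0⟩ (fun n ih => ⟨(hstep n ih.1 ih.2).choose, (hstep n ih.1 ih.2).choose_spec.1⟩) n
  refine ⟨fun n => (g n).1, rfl, fun n => (g n).2, fun n => ?_⟩
  exact (hstep n (g n).1 (g n).2).choose_spec.2

lemma aux_next_prime (k C : ℝ) (hk : 1 < k) (hC : 0 < C)
    (hgap : ∀ n : ℕ,
      ((Nat.nth Nat.Prime (n + 1) : ℝ) - (Nat.nth Nat.Prime n : ℝ)) ≤
        C * (Real.log (Nat.nth Nat.Prime n)) ^ k)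
    (x : ℝ) (hx : 2 ≤ x) :
    ∃ p : ℕ, p.Prime ∧ x < p ∧ (p : ℝ) ≤ x + C * (Real.log x) ^ k := by
  have hinf : (setOf Nat.Prime).Infinite := Nat.infinite_setOf_prime
  set N : ℕ := ⌊x⌋₊ with hN
  have hN2 : 2 ≤ N := Nat.le_floor (by exact_mod_cast hx)
  have hNx : (N : ℝ) ≤ x := Nat.floor_le (by linarith)
  have hxN : x < (N : ℝ) + 1 := Nat.lt_floor_add_one x
  set S : Set ℕ := {j | Nat.nth Nat.Prime j ≤ N} with hS
  have hS0 : 0 ∈ S := by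
    simp only [hS, Set.mem_setOf_eq]
    rw [Nat.nth_prime_zero_eq_two]; exact hN2
  have hSb : BddAbove S := by
    refine ⟨N, fun j hj => ?_⟩
    exact le_trans ((Nat.nth_strictMono hinf).le_apply) hj
  set i := sSup S with hi
  have hiS : i ∈ S := Nat.sSup_mem ⟨0, hS0⟩ hSb
  have hnot : i + 1 ∉ S := fun h => by
    have := le_csSup hSb h
    omega
  have h1 : (Nat.nth Nat.Prime i : ℝ) ≤ x := le_trans (by exact_mod_cast hiS) hNx
  have h2 : x < (Nat.nth Nat.Prime (i + 1) : ℝ) := by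
    have : N + 1 ≤ Nat.nth Nat.Prime (i + 1) := by
      have := hnot; simp only [hS, Set.mem_setOf_eq, not_le] at this; omega
    calc x < (N : ℝ) + 1 := hxN
      _ ≤ _ := by exact_mod_cast this
  have hp2 : 2 ≤ Nat.nth Nat.Prime i := (Nat.prime_nth_prime i).two_le
  have hlog : Real.log (Nat.nth Nat.Prime i) ≤ Real.log x :=
    Real.log_le_log (by positivity) h1
  have hlog0 : 0 ≤ Real.log (Nat.nth Nat.Prime i) :=
    Real.log_nonneg (by exact_mod_cast le_trans one_le_two hp2)
  refine ⟨Nat.nth Nat.Prime (i + 1), Nat.prime_nth_prime _, h2, ?_⟩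
  have := hgap i
  have hrp : (Real.log (Nat.nth Nat.Prime i)) ^ k ≤ (Real.log x) ^ k :=
    Real.rpow_le_rpow hlog0 hlog (by linarith)
  nlinarith [mul_le_mul_of_nonneg_left hrp hC.le]

lemma aux_eventual (k C ξ : ℝ) (hk : 1 < k) (hC : 0 < C) (hξ : 1 < ξ) :
    ∃ L : ℝ, 1 ≤ L ∧ ∀ t, L ≤ t →
      C * (2 ^ ξ * t) ^ k + 1 < Real.exp (t ^ (1 - 1 / ξ)) := by
  set α : ℝ := 1 - 1 / ξ with hα
  have hα0 : 0 < α := by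
    have : 1 / ξ < 1 := by rw [div_lt_one (by linarith)]; linarith
    rw [hα]; rw [one_div] at this ⊢; linarith
  set β : ℝ := k / α with hβ
  have hβ0 : 0 < β := div_pos (by linarith) hα0
  set D : ℝ := C * (2 ^ ξ) ^ k with hD
  have hD0 : 0 < D := by
    have : (0:ℝ) < (2:ℝ) ^ ξ := Real.rpow_pos_of_pos two_pos ξ
    positivity
  have h1 : ∀ᶠ u : ℝ in atTop, D * u ^ β + 1 < Real.exp u := by
    have h := (tendsto_exp_div_rpow_atTop β).eventually_gt_atTop (D + 2)
    filter_upwards [h, eventually_ge_atTop (1 : ℝ)] with u hu hu1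
    have hub : (1:ℝ) ≤ u ^ β := Real.one_le_rpow hu1 hβ0.le
    have hub0 : (0:ℝ) < u ^ β := by linarith
    rw [lt_div_iff₀ hub0] at hu
    nlinarith
  have h2 : ∀ᶠ t : ℝ in atTop, D * (t ^ α) ^ β + 1 < Real.exp (t ^ α) :=
    (tendsto_rpow_atTop hα0).eventually h1
  obtain ⟨L0, hL0⟩ := (h2.and (eventually_ge_atTop (1:ℝ))).exists_forall_of_atTop
  refine ⟨max L0 1, le_max_right _ _, fun t ht => ?_⟩
  obtain ⟨h, ht1⟩ := hL0 t (le_trans (le_max_left _ _) ht)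
  have ht0 : (0:ℝ) ≤ t := by linarith
  have e1 : (t ^ α) ^ β = t ^ k := by
    rw [← Real.rpow_mul ht0]
    congr 1
    field_simp [hβ]
    rw [hβ]; field_simp [hα0.ne']
  have e2 : C * (2 ^ ξ * t) ^ k = D * t ^ k := by
    rw [Real.mul_rpow (by positivity) ht0, hD]; ring
  rw [e2, ← e1]; exact h

lemma aux_step (k C ξ L : ℝ) (hk : 1 < k) (hC : 0 < C) (hξ : 1 < ξ) (hL : 1 ≤ L)
    (hL2 : ∀ t, L ≤ t → C * (2 ^ ξ * t) ^ k + 1 < Real.exp (t ^ (1 - 1 / ξ)))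
    (hnext : ∀ x : ℝ, 2 ≤ x → ∃ p : ℕ, p.Prime ∧ x < p ∧ (p : ℝ) ≤ x + C * (Real.log x) ^ k)
    (n : ℕ) (hn : 1 ≤ n) (q : ℕ) (hq : q.Prime) (hlog : L * (n : ℝ) ^ ξ ≤ Real.log q) :
    ∃ p : ℕ, p.Prime ∧ L * ((n : ℝ) + 1) ^ ξ ≤ Real.log p ∧
      (q : ℝ) ^ ((((n : ℝ) + 1) / n) ^ ξ) < p ∧
      (p : ℝ) + 1 < ((q : ℝ) + 1) ^ ((((n : ℝ) + 1) / n) ^ ξ) := by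
  have hξ0 : (0:ℝ) ≤ ξ := by linarith
  have hn1 : (1:ℝ) ≤ (n : ℝ) := by exact_mod_cast hn
  have hn0 : (0:ℝ) < (n : ℝ) := by linarith
  have hq2 : (2:ℝ) ≤ (q : ℝ) := by exact_mod_cast hq.two_le
  have hq0 : (0:ℝ) < (q : ℝ) := by linarith
  set t : ℝ := Real.log q with htdef
  set r : ℝ := (((n : ℝ) + 1) / n) ^ ξ with hrdef
  have hnξ1 : (1:ℝ) ≤ (n : ℝ) ^ ξ := Real.one_le_rpow hn1 hξ0
  have hnξ0 : (0:ℝ) < (n : ℝ) ^ ξ := by linarith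
  have htL : L ≤ t := le_trans (le_mul_of_one_le_right (by linarith) hnξ1) hlog
  have ht1 : (1:ℝ) ≤ t := le_trans hL htL
  have ht0 : (0:ℝ) < t := by linarith
  have hbase1 : (1:ℝ) ≤ ((n : ℝ) + 1) / n := by
    rw [le_div_iff₀ hn0]; linarith
  have hbase2 : ((n : ℝ) + 1) / n ≤ 2 := by
    rw [div_le_iff₀ hn0]; linarith
  have hr1 : (1:ℝ) ≤ r := Real.one_le_rpow hbase1 hξ0
  have hrle : r ≤ 2 ^ ξ := Real.rpow_le_rpow (by linarith) hbase2 hξ0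
  have hrB : 1 + ξ * (1 / n) ≤ r := by
    have := one_add_mul_self_le_rpow_one_add (s := 1/(n:ℝ))
      (le_trans (by norm_num : (-1:ℝ) ≤ 0) (by positivity)) hξ.le
    calc 1 + ξ * (1/(n:ℝ)) ≤ (1 + 1/(n:ℝ)) ^ ξ := this
      _ = r := by rw [hrdef]; congr 1; field_simp
  -- the key numeric inequality
  set α : ℝ := 1 - 1 / ξ with hα
  have hαt : t ^ α ≤ t / n := by
    have h1 : (n : ℝ) ^ ξ ≤ t := le_trans (le_mul_of_one_le_left hnξ0.le hL) hlog
    have h2 : (n : ℝ) ≤ t ^ (1 / ξ) := by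
      have := Real.rpow_le_rpow hnξ0.le h1 (by positivity : (0:ℝ) ≤ 1 / ξ)
      rwa [← Real.rpow_mul hn0.le, mul_one_div, div_self (by linarith : ξ ≠ 0),
        Real.rpow_one] at this
    have h3 : t ^ α = t / t ^ (1 / ξ) := by
      rw [hα, Real.rpow_sub ht0, Real.rpow_one]
    rw [h3]
    exact div_le_div_of_nonneg_left (by linarith) hn0 h2
  have htα0 : (0:ℝ) < t ^ α := Real.rpow_pos_of_pos ht0 α
  have hkey : C * (r * t) ^ k + 1 < Real.exp ((r - 1) * t) := by
    have ha : t ^ α < (r - 1) * t := by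
      have h1 : ξ * (t / n) ≤ (r - 1) * t := by
        have : ξ * (1 / n) ≤ r - 1 := by linarith
        calc ξ * (t / n) = (ξ * (1 / n)) * t := by ring
          _ ≤ (r - 1) * t := mul_le_mul_of_nonneg_right this ht0.le
      have h2 : ξ * t ^ α ≤ ξ * (t / n) := mul_le_mul_of_nonneg_left hαt (by linarith)
      nlinarith
    have hb : C * (r * t) ^ k ≤ C * (2 ^ ξ * t) ^ k := by
      refine mul_le_mul_of_nonneg_left (Real.rpow_le_rpow (by positivity) ?_ (by linarith)) hC.le
      exact mul_le_mul_of_nonneg_right hrle ht0.le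
    calc C * (r * t) ^ k + 1 ≤ C * (2 ^ ξ * t) ^ k + 1 := by linarith
      _ < Real.exp (t ^ α) := hL2 t htL
      _ < Real.exp ((r - 1) * t) := Real.exp_lt_exp.2 ha
  -- get the next prime
  set x : ℝ := (q : ℝ) ^ r with hx
  have hqx : (q : ℝ) ≤ x := by
    calc (q:ℝ) = (q:ℝ) ^ (1:ℝ) := (Real.rpow_one _).symm
      _ ≤ x := Real.rpow_le_rpow_of_exponent_le (by linarith) hr1
  have hx2 : 2 ≤ x := by linarith
  obtain ⟨p, hp, hxp, hpx⟩ := hnext x hx2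
  have hlogx : Real.log x = r * t := Real.log_rpow hq0 r
  -- upper bound: (q+1)^r ≥ q^r + exp((r-1)t)
  have hup : x + Real.exp ((r - 1) * t) ≤ ((q : ℝ) + 1) ^ r := by
    have hB : 1 + r * (1 / q) ≤ (1 + 1 / (q:ℝ)) ^ r :=
      one_add_mul_self_le_rpow_one_add (s := 1/(q:ℝ)) (le_trans (by norm_num : (-1:ℝ) ≤ 0) (by positivity)) hr1
    have hsplit : ((q : ℝ) + 1) ^ r = x * (1 + 1 / (q:ℝ)) ^ r := by
      rw [hx, ← Real.mul_rpow hq0.le (by positivity)]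
      congr 1; field_simp
    have hq_pow : x / q = Real.exp ((r - 1) * t) := by
      calc x / q = (q:ℝ) ^ (r - 1) := by
            rw [hx, Real.rpow_sub hq0, Real.rpow_one]
          _ = Real.exp ((r - 1) * t) := by
            rw [Real.rpow_def_of_pos hq0, mul_comm]
    have hx0' : (0:ℝ) < x := by linarith
    have h1 : x * (1 + r * (1 / q)) ≤ x * (1 + 1 / (q:ℝ)) ^ r :=
      mul_le_mul_of_nonneg_left hB hx0'.le
    have h2 : x * (1 + r * (1 / q)) = x + r * (x / q) := by field_simp
    rw [hq_pow] at h2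
    have h3 : Real.exp ((r - 1) * t) ≤ r * Real.exp ((r - 1) * t) :=
      le_mul_of_one_le_left (Real.exp_pos _).le hr1
    rw [hsplit]; linarith
  have hx0 : (0:ℝ) < x := by linarith
  refine ⟨p, hp, ?_, hxp, ?_⟩
  · have h1 : Real.log x ≤ Real.log p := Real.log_le_log hx0 hxp.le
    have h2 : L * ((n : ℝ) + 1) ^ ξ ≤ r * t := by
      have e : r * (n : ℝ) ^ ξ = ((n : ℝ) + 1) ^ ξ := by
        rw [hrdef, ← Real.mul_rpow (by positivity) hn0.le, div_mul_cancel₀]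
        exact ne_of_gt hn0
      calc L * ((n : ℝ) + 1) ^ ξ = r * (L * (n : ℝ) ^ ξ) := by rw [← e]; ring
        _ ≤ r * t := mul_le_mul_of_nonneg_left hlog (by linarith)
    rw [hlogx] at h1; linarith
  · have := hkey
    rw [hlogx] at hpx
    linarith

/-- Corollary 1: under the weak Cramér conjecture, for every ξ > 1 there is A > 1
with ⌊A^(n^ξ)⌋ prime for all n ≥ 1 and strictly increasing. -/
theorem stmt_1 (k C : ℝ) (hk : 1 < k) (hC : 0 < C)
    (hgap : ∀ n : ℕ,
      ((Nat.nth Nat.Prime (n + 1) : ℝ) - (Nat.nth Nat.Prime n : ℝ)) ≤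
        C * (Real.log (Nat.nth Nat.Prime n)) ^ k) :
    ∀ ξ : ℝ, 1 < ξ → ∃ A : ℝ, 1 < A ∧
      (∀ n : ℕ, 1 ≤ n → ⌊A ^ ((n : ℝ) ^ ξ)⌋ < ⌊A ^ (((n : ℝ) + 1) ^ ξ)⌋) ∧
      (∀ n : ℕ, 1 ≤ n → Prime ⌊A ^ ((n : ℝ) ^ ξ)⌋) := by
  intro ξ hξ
  have hξ0 : (0:ℝ) ≤ ξ := by linarith
  obtain ⟨L, hL1, hL2⟩ := aux_eventual k C ξ hk hC hξ
  have hnext := aux_next_prime k C hk hC hgap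
  -- base prime
  obtain ⟨Q, hQge, hQp⟩ := Nat.exists_infinite_primes (⌈Real.exp L⌉₊ + 1)
  have hQ0 : (0:ℝ) < (Q : ℝ) := by exact_mod_cast hQp.pos
  have hQlog : L * ((0:ℕ) + 1 : ℝ) ^ ξ ≤ Real.log Q := by
    have h1 : Real.exp L ≤ (Q : ℝ) := by
      calc Real.exp L ≤ (⌈Real.exp L⌉₊ : ℝ) := Nat.le_ceil _
        _ ≤ (Q : ℝ) := by exact_mod_cast le_trans (Nat.le_succ _) hQge
    have h2 : L ≤ Real.log Q := (Real.le_log_iff_exp_le hQ0).2 h1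
    simpa [Real.one_rpow] using h2
  -- build the sequence
  set P : ℕ → ℕ → Prop := fun m q => q.Prime ∧ L * ((m : ℝ) + 1) ^ ξ ≤ Real.log q with hP
  set R : ℕ → ℕ → ℕ → Prop := fun m q p =>
    (q : ℝ) ^ ((((m : ℝ) + 1 + 1) / ((m : ℝ) + 1)) ^ ξ) < p ∧
      (p : ℝ) + 1 < ((q : ℝ) + 1) ^ ((((m : ℝ) + 1 + 1) / ((m : ℝ) + 1)) ^ ξ) with hR
  have hstep : ∀ m q, P m q → ∃ p, P (m + 1) p ∧ R m q p := by
    intro m q hPq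
    obtain ⟨p, hp1, hp2, hp3, hp4⟩ := aux_step k C ξ L hk hC hξ hL1 hL2 hnext (m + 1)
      (Nat.le_add_left 1 m) q hPq.1 (by push_cast; exact_mod_cast hPq.2)
    refine ⟨p, ⟨hp1, by push_cast at hp2 ⊢; exact_mod_cast hp2⟩, ?_, ?_⟩
    · push_cast at hp3 ⊢; exact_mod_cast hp3
    · push_cast at hp4 ⊢; exact_mod_cast hp4
  obtain ⟨f, hf0, hfP, hfR⟩ := aux_seq_exists Q ⟨hQp, by exact_mod_cast hQlog⟩ hstep
  -- basic facts
  set e : ℕ → ℝ := fun m => ((m : ℝ) + 1) ^ ξ with he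
  set rr : ℕ → ℝ := fun m => (((m : ℝ) + 1 + 1) / ((m : ℝ) + 1)) ^ ξ with hrr
  have hm1 : ∀ m : ℕ, (1:ℝ) ≤ (m : ℝ) + 1 := fun m => by
    have := Nat.cast_nonneg (α := ℝ) m; linarith
  have he1 : ∀ m, (1:ℝ) ≤ e m := fun m => Real.one_le_rpow (hm1 m) hξ0
  have he0 : ∀ m, (0:ℝ) < e m := fun m => lt_of_lt_of_le one_pos (he1 m)
  have hrr1 : ∀ m, (1:ℝ) ≤ rr m := fun m =>
    Real.one_le_rpow (by rw [le_div_iff₀ (by positivity)]; linarith [hm1 m]) hξ0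
  have hE : ∀ m, rr m * e m = e (m + 1) := by
    intro m
    rw [hrr, he, ← Real.mul_rpow (by positivity) (by positivity),
      div_mul_cancel₀ _ (by positivity : ((m:ℝ) + 1) ≠ 0)]
    push_cast; ring_nf
  have hf2 : ∀ m, (2:ℝ) ≤ (f m : ℝ) := fun m => by exact_mod_cast (hfP m).1.two_le
  have hf0' : ∀ m, (0:ℝ) < (f m : ℝ) := fun m => by linarith [hf2 m]
  set a : ℕ → ℝ := fun m => (f m : ℝ) ^ (1 / e m) with ha
  set b : ℕ → ℝ := fun m => ((f m : ℝ) + 1) ^ (1 / e m) with hb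
  have hdiv : ∀ m, rr m * (1 / e (m + 1)) = 1 / e m := by
    intro m
    rw [mul_one_div, div_eq_div_iff (he0 (m+1)).ne' (he0 m).ne', one_mul]
    linarith [hE m]
  have hamono : StrictMono a := by
    refine strictMono_nat_of_lt_succ fun m => ?_
    have h := (hfR m).1
    have := Real.rpow_lt_rpow (by positivity) h (by positivity : (0:ℝ) < 1 / e (m+1))
    rwa [← Real.rpow_mul (hf0' m).le, hdiv m] at this
  have hbanti : StrictAnti b := by
    refine strictAnti_nat_of_succ_lt fun m => ?_
    have h := (hfR m).2
    have := Real.rpow_lt_rpow (by positivity) h (by positivity : (0:ℝ) < 1 / e (m+1))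
    rwa [← Real.rpow_mul (by positivity), hdiv m] at this
  have habm : ∀ m, a m < b m := fun m =>
    Real.rpow_lt_rpow (hf0' m).le (by linarith [hf2 m]) (by positivity)
  have hab : ∀ m j, a m < b j := by
    intro m j
    rcases le_total m j with h | h
    · exact lt_of_le_of_lt (hamono.monotone h) (habm j)
    · exact lt_of_lt_of_le (habm m) (hbanti.antitone h)
  have hbdd : BddAbove (Set.range a) := ⟨b 0, by rintro _ ⟨m, rfl⟩; exact (hab m 0).le⟩
  set A : ℝ := ⨆ m, a m with hA
  have haA : ∀ m, a m ≤ A := fun m => le_ciSup hbdd m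
  have hAb : ∀ m, A < b m := by
    intro m
    calc A ≤ b (m + 1) := ciSup_le fun j => (hab j (m+1)).le
      _ < b m := hbanti (Nat.lt_succ_self m)
  have ha0A : (2:ℝ) ≤ A := by
    have : a 0 = (f 0 : ℝ) := by
      rw [ha]
      simp only [he]
      norm_num [Real.one_rpow]
    linarith [haA 0, hf2 0, this.symm.le.trans (haA 0)]
  have hA0 : (0:ℝ) ≤ A := by linarith
  -- floor identity
  have hfloor : ∀ m, ⌊A ^ e m⌋ = (f m : ℤ) := by
    intro m
    have hlow : (f m : ℝ) ≤ A ^ e m := by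
      have h1 : a m ^ e m = (f m : ℝ) := by
        rw [ha, ← Real.rpow_mul (hf0' m).le, one_div_mul_cancel (he0 m).ne', Real.rpow_one]
      calc (f m : ℝ) = a m ^ e m := h1.symm
        _ ≤ A ^ e m := Real.rpow_le_rpow (by positivity) (haA m) (he0 m).le
    have hhigh : A ^ e m < (f m : ℝ) + 1 := by
      have h1 : b m ^ e m = (f m : ℝ) + 1 := by
        rw [hb, ← Real.rpow_mul (by positivity), one_div_mul_cancel (he0 m).ne', Real.rpow_one]
      calc A ^ e m < b m ^ e m := Real.rpow_lt_rpow hA0 (hAb m) (he0 m)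
        _ = (f m : ℝ) + 1 := h1
    rw [Int.floor_eq_iff]
    constructor <;> push_cast <;> [exact hlow; exact hhigh]
  have hfmono : ∀ m, f m < f (m + 1) := by
    intro m
    have h1 : (f m : ℝ) ≤ (f m : ℝ) ^ rr m := by
      calc (f m : ℝ) = (f m : ℝ) ^ (1:ℝ) := (Real.rpow_one _).symm
        _ ≤ _ := Real.rpow_le_rpow_of_exponent_le (by linarith [hf2 m]) (hrr1 m)
    have := lt_of_le_of_lt h1 (hfR m).1
    exact_mod_cast this
  refine ⟨A, by linarith, ?_, ?_⟩
  · intro n hn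
    obtain ⟨m, rfl⟩ : ∃ m, m + 1 = n := ⟨n - 1, Nat.succ_pred_eq_of_pos hn⟩
    have e1 : ((m + 1 : ℕ) : ℝ) ^ ξ = e m := by push_cast [he]; ring_nf
    have e2 : (((m + 1 : ℕ) : ℝ) + 1) ^ ξ = e (m + 1) := by push_cast [he]; ring_nf
    rw [e1, e2, hfloor m, hfloor (m + 1)]
    exact_mod_cast hfmono m
  · intro n hn
    obtain ⟨m, rfl⟩ : ∃ m, m + 1 = n := ⟨n - 1, Nat.succ_pred_eq_of_pos hn⟩
    have e1 : ((m + 1 : ℕ) : ℝ) ^ ξ = e m := by push_cast [he]; ring_nf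
    rw [e1, hfloor m]
    exact Nat.prime_iff_prime_int.1 (hfP m).1
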